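/- arXiv:2105.02164 — 2 statements merged into one kernel-verified Lean document; each statement's English description precedes it below -/
import Mathlib

section
/- For jointly Gaussian random variables (X, Y) where X = sqrt(1-ρ²)·Z₁ + ρ·Z₂ and Y = Z₂ with Z₁, Z₂ independent standard normals and ρ ∈ [-1,1], the covariance of |X| and |Y| equals φ(ρ) = (2/π)(ρ·arcsin(ρ) + sqrt(1-ρ²) - 1). -/
open MeasureTheory ProbabilityTheory Real Set intervalIntegral

lemma integral_sin_shift_mul_sin (α a b : ℝ) :
    ∫ x in a..b, Real.sin (x + α) * Real.sin x =
      (b * Real.cos α / 2 - Real.sin (2*b + α) / 4)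
        - (a * Real.cos α / 2 - Real.sin (2*a + α) / 4) := by
  have h : ∀ x ∈ Set.uIcc a b, HasDerivAt (fun x => x * Real.cos α / 2 - Real.sin (2*x + α) / 4)
      (Real.sin (x + α) * Real.sin x) x := by
    intro x _
    have h1 : HasDerivAt (fun x : ℝ => 2*x + α) 2 x := by
      simpa using ((hasDerivAt_id x).const_mul 2).add_const α
    have h2 := (h1.sin).div_const 4
    have h3 := ((hasDerivAt_id x).mul_const (Real.cos α)).div_const 2
    refine (h3.sub h2).congr_deriv ?_
    simp only [Real.sin_add, Real.cos_add, Real.sin_two_mul, Real.cos_two_mul, Real.sin_sq]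
    ring_nf
    rw [Real.sin_sq]
    ring
  rw [intervalIntegral.integral_eq_sub_of_hasDerivAt h (Continuous.intervalIntegrable (by fun_prop) a b)]

lemma integral_sin_shift (α a b : ℝ) :
    ∫ x in a..b, Real.sin (x + α) = Real.cos (a + α) - Real.cos (b + α) := by
  have h : ∀ x ∈ Set.uIcc a b, HasDerivAt (fun x => -Real.cos (x + α)) (Real.sin (x + α)) x := by
    intro x _
    have h1 : HasDerivAt (fun x : ℝ => x + α) 1 x := (hasDerivAt_id x).add_const α
    simpa [Pi.neg_def] using (h1.cos).neg
  rw [intervalIntegral.integral_eq_sub_of_hasDerivAt h (Continuous.intervalIntegrable (by fun_prop) a b)]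
  ring

lemma ang2 {α : ℝ} (hα0 : 0 ≤ α) (hαπ : α ≤ π) :
    ∫ θ in (-π)..π, |Real.sin (θ + α)| * |Real.sin θ|
      = 2 * Real.sin α + (π - 2 * α) * Real.cos α := by
  have hii : ∀ a b : ℝ, IntervalIntegrable (fun θ => |Real.sin (θ + α)| * |Real.sin θ|) volume a b :=
    fun a b => Continuous.intervalIntegrable (by fun_prop) a b
  rw [← intervalIntegral.integral_add_adjacent_intervals (hii (-π) (-α)) (hii (-α) π),
      ← intervalIntegral.integral_add_adjacent_intervals (hii (-α) 0) (hii 0 π),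
      ← intervalIntegral.integral_add_adjacent_intervals (hii 0 (π-α)) (hii (π-α) π)]
  have pi_pos := Real.pi_pos
  have p1 : ∫ θ in (-π)..(-α), |Real.sin (θ + α)| * |Real.sin θ|
      = ∫ θ in (-π)..(-α), Real.sin (θ + α) * Real.sin θ := by
    apply intervalIntegral.integral_congr
    intro θ hθ
    rw [Set.uIcc_of_le (by linarith)] at hθ
    obtain ⟨h1, h2⟩ := hθ
    have hs1 : Real.sin θ ≤ 0 := Real.sin_nonpos_of_nonpos_of_neg_pi_le (by linarith) h1
    have hs2 : Real.sin (θ + α) ≤ 0 :=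
      Real.sin_nonpos_of_nonpos_of_neg_pi_le (by linarith) (by linarith)
    simp only [abs_of_nonpos hs1, abs_of_nonpos hs2]; ring
  have p2 : ∫ θ in (-α)..(0:ℝ), |Real.sin (θ + α)| * |Real.sin θ|
      = -∫ θ in (-α)..(0:ℝ), Real.sin (θ + α) * Real.sin θ := by
    rw [← intervalIntegral.integral_neg]
    apply intervalIntegral.integral_congr
    intro θ hθ
    rw [Set.uIcc_of_le (by linarith)] at hθ
    obtain ⟨h1, h2⟩ := hθ
    have hs1 : Real.sin θ ≤ 0 := Real.sin_nonpos_of_nonpos_of_neg_pi_le h2 (by linarith)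
    have hs2 : 0 ≤ Real.sin (θ + α) :=
      Real.sin_nonneg_of_nonneg_of_le_pi (by linarith) (by linarith)
    simp only [abs_of_nonpos hs1, abs_of_nonneg hs2]; ring
  have p3 : ∫ θ in (0:ℝ)..(π-α), |Real.sin (θ + α)| * |Real.sin θ|
      = ∫ θ in (0:ℝ)..(π-α), Real.sin (θ + α) * Real.sin θ := by
    apply intervalIntegral.integral_congr
    intro θ hθ
    rw [Set.uIcc_of_le (by linarith)] at hθ
    obtain ⟨h1, h2⟩ := hθ
    have hs1 : 0 ≤ Real.sin θ := Real.sin_nonneg_of_nonneg_of_le_pi h1 (by linarith)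
    have hs2 : 0 ≤ Real.sin (θ + α) :=
      Real.sin_nonneg_of_nonneg_of_le_pi (by linarith) (by linarith)
    simp only [abs_of_nonneg hs1, abs_of_nonneg hs2]
  have p4 : ∫ θ in (π-α)..π, |Real.sin (θ + α)| * |Real.sin θ|
      = -∫ θ in (π-α)..π, Real.sin (θ + α) * Real.sin θ := by
    rw [← intervalIntegral.integral_neg]
    apply intervalIntegral.integral_congr
    intro θ hθ
    rw [Set.uIcc_of_le (by linarith)] at hθ
    obtain ⟨h1, h2⟩ := hθ
    have hs1 : 0 ≤ Real.sin θ := Real.sin_nonneg_of_nonneg_of_le_pi (by linarith) h2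
    have hs2 : Real.sin (θ + α) ≤ 0 := by
      have : 0 ≤ Real.sin (θ + α - π) :=
        Real.sin_nonneg_of_nonneg_of_le_pi (by linarith) (by linarith)
      rw [Real.sin_sub_pi] at this
      linarith
    simp only [abs_of_nonneg hs1, abs_of_nonpos hs2]; ring
  rw [p1, p2, p3, p4, integral_sin_shift_mul_sin, integral_sin_shift_mul_sin,
      integral_sin_shift_mul_sin, integral_sin_shift_mul_sin]
  have h1 : Real.sin (2*(-π)+α) = Real.sin α := by
    rw [show 2*(-π)+α = α - 2*π by ring, Real.sin_sub_two_pi]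
  have h2 : Real.sin (2*(-α)+α) = -Real.sin α := by
    rw [show 2*(-α)+α = -α by ring, Real.sin_neg]
  have h4 : Real.sin (2*(π-α)+α) = -Real.sin α := by
    rw [show 2*(π-α)+α = 2*π - α by ring, Real.sin_two_pi_sub]
  have h5 : Real.sin (2*π+α) = Real.sin α := by
    rw [show 2*π+α = α + 2*π by ring, Real.sin_add_two_pi]
  rw [h1, h2, h4, h5]
  norm_num
  ring

lemma ang1 {α : ℝ} (hα0 : 0 ≤ α) (hαπ : α ≤ π) :
    ∫ θ in (-π)..π, |Real.sin (θ + α)| = 4 := by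
  have hii : ∀ a b : ℝ, IntervalIntegrable (fun θ => |Real.sin (θ + α)|) volume a b :=
    fun a b => Continuous.intervalIntegrable (by fun_prop) a b
  rw [← intervalIntegral.integral_add_adjacent_intervals (hii (-π) (-α)) (hii (-α) π),
      ← intervalIntegral.integral_add_adjacent_intervals (hii (-α) (π-α)) (hii (π-α) π)]
  have pi_pos := Real.pi_pos
  have p1 : ∫ θ in (-π)..(-α), |Real.sin (θ + α)|
      = -∫ θ in (-π)..(-α), Real.sin (θ + α) := by
    rw [← intervalIntegral.integral_neg]
    apply intervalIntegral.integral_congr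
    intro θ hθ
    rw [Set.uIcc_of_le (by linarith)] at hθ
    obtain ⟨h1, h2⟩ := hθ
    have hs2 : Real.sin (θ + α) ≤ 0 :=
      Real.sin_nonpos_of_nonpos_of_neg_pi_le (by linarith) (by linarith)
    simp only [abs_of_nonpos hs2]
  have p2 : ∫ θ in (-α)..(π-α), |Real.sin (θ + α)|
      = ∫ θ in (-α)..(π-α), Real.sin (θ + α) := by
    apply intervalIntegral.integral_congr
    intro θ hθ
    rw [Set.uIcc_of_le (by linarith)] at hθ
    obtain ⟨h1, h2⟩ := hθ
    have hs2 : 0 ≤ Real.sin (θ + α) :=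
      Real.sin_nonneg_of_nonneg_of_le_pi (by linarith) (by linarith)
    simp only [abs_of_nonneg hs2]
  have p3 : ∫ θ in (π-α)..π, |Real.sin (θ + α)|
      = -∫ θ in (π-α)..π, Real.sin (θ + α) := by
    rw [← intervalIntegral.integral_neg]
    apply intervalIntegral.integral_congr
    intro θ hθ
    rw [Set.uIcc_of_le (by linarith)] at hθ
    obtain ⟨h1, h2⟩ := hθ
    have hs2 : Real.sin (θ + α) ≤ 0 := by
      have : 0 ≤ Real.sin (θ + α - π) :=
        Real.sin_nonneg_of_nonneg_of_le_pi (by linarith) (by linarith)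
      rw [Real.sin_sub_pi] at this
      linarith
    simp only [abs_of_nonpos hs2]
  rw [p1, p2, p3, integral_sin_shift, integral_sin_shift, integral_sin_shift]
  have h1 : Real.cos (-π + α) = -Real.cos α := by
    rw [show -π + α = -(π - α) by ring, Real.cos_neg, Real.cos_pi_sub]
  have h2 : Real.cos (-α + α) = 1 := by norm_num
  have h3 : Real.cos (π - α + α) = -1 := by norm_num
  have h4 : Real.cos (π + α) = -Real.cos α := by
    rw [show π + α = -(-π - α) by ring, Real.cos_neg, show -π - α = (-α) - π by ring, Real.cos_sub_pi, Real.cos_neg]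
  rw [h1, h2, h3, h4]
  ring

lemma integrableOn_pow_mul_exp (n : ℕ) :
    IntegrableOn (fun r : ℝ => r ^ n * Real.exp (-r^2/2)) (Set.Ioi 0) := by
  have h := integrableOn_rpow_mul_exp_neg_mul_sq (b := 1/2) (by norm_num) (s := (n:ℝ))
    ((by norm_num : (-1:ℝ) < 0).trans_le (Nat.cast_nonneg n))
  apply h.congr_fun ?_ measurableSet_Ioi
  intro x hx
  simp only [Real.rpow_natCast]
  ring_nf

lemma tendsto_aux : Filter.Tendsto (fun r : ℝ => (r^2 + 2) * Real.exp (-r^2/2))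
    Filter.atTop (nhds 0) := by
  have h1 : Filter.Tendsto (fun u : ℝ => (2*u + 2) * Real.exp (-u)) Filter.atTop (nhds 0) := by
    have ha := Real.tendsto_pow_mul_exp_neg_atTop_nhds_zero 1
    have hb := Real.tendsto_pow_mul_exp_neg_atTop_nhds_zero 0
    have := (ha.const_mul 2).add ((hb.const_mul 2))
    simp only [pow_one, pow_zero, one_mul] at this
    convert this using 2 with u
    · ring
    · norm_num
  have h2 : Filter.Tendsto (fun r : ℝ => r^2/2) Filter.atTop Filter.atTop := by
    apply Filter.Tendsto.atTop_div_const (by norm_num)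
    exact Filter.tendsto_pow_atTop (by norm_num)
  have h3 := h1.comp h2
  convert h3 using 2 with r
  simp only [Function.comp]
  rw [neg_div]
  ring_nf

lemma deriv_sq_half (x : ℝ) : HasDerivAt (fun r : ℝ => -r^2/2) (-x) x := by
  have h : HasDerivAt (fun r : ℝ => r^2) (2*x) x := by
    simpa using (hasDerivAt_pow 2 x)
  refine (h.neg.div_const 2).congr_deriv ?_
  ring

lemma rad3 : ∫ r in Set.Ioi (0:ℝ), r ^ 3 * Real.exp (-r^2/2) = 2 := by
  have hderiv : ∀ x ∈ Set.Ici (0:ℝ),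
      HasDerivAt (fun r : ℝ => -(r^2+2) * Real.exp (-r^2/2)) (x ^ 3 * Real.exp (-x^2/2)) x := by
    intro x _
    have h2 := (deriv_sq_half x).exp
    have h3 : HasDerivAt (fun r : ℝ => -(r^2+2)) (-(2*x)) x := by
      have h : HasDerivAt (fun r : ℝ => r^2) (2*x) x := by
        simpa using (hasDerivAt_pow 2 x)
      simpa [Pi.neg_def] using (h.add_const 2).neg
    refine (h3.mul h2).congr_deriv ?_
    ring
  have htend : Filter.Tendsto (fun r : ℝ => -(r^2+2) * Real.exp (-r^2/2))
      Filter.atTop (nhds 0) := by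
    have := tendsto_aux.neg
    rw [neg_zero] at this
    exact this.congr (fun r => by ring)
  have key := MeasureTheory.integral_Ioi_of_hasDerivAt_of_tendsto'
    hderiv (integrableOn_pow_mul_exp 3) htend
  rw [key]
  norm_num

lemma tendsto_aux2 : Filter.Tendsto (fun r : ℝ => -r * Real.exp (-r^2/2))
    Filter.atTop (nhds 0) := by
  apply squeeze_zero_norm ?_ tendsto_aux
  intro r
  rw [norm_mul, Real.norm_eq_abs, Real.norm_eq_abs, abs_neg, abs_of_pos (Real.exp_pos _)]
  apply mul_le_mul_of_nonneg_right ?_ (Real.exp_pos _).le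
  nlinarith [sq_abs r, abs_nonneg r]

lemma rad2 : ∫ r in Set.Ioi (0:ℝ), r ^ 2 * Real.exp (-r^2/2) = Real.sqrt (2*π) / 2 := by
  have hderiv : ∀ x ∈ Set.Ici (0:ℝ),
      HasDerivAt (fun r : ℝ => -r * Real.exp (-r^2/2))
        (x ^ 2 * Real.exp (-x^2/2) - Real.exp (-x^2/2)) x := by
    intro x _
    have h2 := (deriv_sq_half x).exp
    have h3 : HasDerivAt (fun r : ℝ => -r) (-1:ℝ) x := (hasDerivAt_id x).neg
    refine (h3.mul h2).congr_deriv ?_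
    ring
  have hint2 := integrableOn_pow_mul_exp 2
  have hint0 : IntegrableOn (fun r : ℝ => Real.exp (-r^2/2)) (Set.Ioi 0) := by
    have := integrableOn_pow_mul_exp 0
    simpa using this
  have key := MeasureTheory.integral_Ioi_of_hasDerivAt_of_tendsto'
    hderiv (hint2.sub hint0) tendsto_aux2
  rw [integral_sub hint2 hint0] at key
  have hexp : ∫ r in Set.Ioi (0:ℝ), Real.exp (-r^2/2) = Real.sqrt (2*π) / 2 := by
    have := integral_gaussian_Ioi (1/2)
    rw [show π / (1/2) = 2 * π by ring] at this
    rw [← this]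
    apply setIntegral_congr_fun measurableSet_Ioi
    intro x _
    show Real.exp (-x^2/2) = Real.exp (-(1/2)*x^2)
    congr 1
    ring
  have : (∫ r in Set.Ioi (0:ℝ), r ^ 2 * Real.exp (-r^2/2)) = (0 - (-0 * Real.exp (-0^2/2))) + ∫ r in Set.Ioi (0:ℝ), Real.exp (-r^2/2) := by
    linarith [key]
  rw [this, hexp]
  norm_num

lemma gauss_prod :
    (gaussianReal 0 1).prod (gaussianReal 0 1)
      = (volume : Measure (ℝ×ℝ)).withDensity
          (fun p => gaussianPDF 0 1 p.1 * gaussianPDF 0 1 p.2) := by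
  refine (Measure.prod_eq fun s t hs ht => ?_)
  rw [withDensity_apply _ (hs.prod ht), Measure.volume_eq_prod, ← Measure.prod_restrict,
    MeasureTheory.lintegral_prod_mul (measurable_gaussianPDF 0 1).aemeasurable
      (measurable_gaussianPDF 0 1).aemeasurable,
    gaussianReal_of_var_ne_zero 0 one_ne_zero, withDensity_apply _ hs, withDensity_apply _ ht]

lemma integral_gauss_prod (f : ℝ×ℝ → ℝ) :
    ∫ p, f p ∂((gaussianReal 0 1).prod (gaussianReal 0 1))
      = ∫ p : ℝ×ℝ, f p * (gaussianPDFReal 0 1 p.1 * gaussianPDFReal 0 1 p.2) := by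
  rw [gauss_prod]
  have hd : (fun p : ℝ×ℝ => gaussianPDF 0 1 p.1 * gaussianPDF 0 1 p.2)
      = fun p : ℝ×ℝ => ((((gaussianPDFReal 0 1 p.1).toNNReal * (gaussianPDFReal 0 1 p.2).toNNReal : NNReal)) : ENNReal) := by
    funext p
    rw [ENNReal.coe_mul]
    rfl
  have hm : Measurable fun p : ℝ×ℝ =>
      (gaussianPDFReal 0 1 p.1).toNNReal * (gaussianPDFReal 0 1 p.2).toNNReal :=
    (((measurable_gaussianPDFReal 0 1).comp measurable_fst).real_toNNReal).mul
      (((measurable_gaussianPDFReal 0 1).comp measurable_snd).real_toNNReal)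
  rw [hd, integral_withDensity_eq_integral_smul hm f]
  congr 1
  funext p
  rw [NNReal.smul_def, NNReal.coe_mul,
    Real.coe_toNNReal _ (gaussianPDFReal_nonneg 0 1 p.1),
    Real.coe_toNNReal _ (gaussianPDFReal_nonneg 0 1 p.2), smul_eq_mul]
  ring

lemma polar_split (f : ℝ×ℝ → ℝ) (R Θ : ℝ → ℝ)
    (h : ∀ p ∈ polarCoord.target, p.1 • f (polarCoord.symm p) = R p.1 * Θ p.2) :
    ∫ p : ℝ×ℝ, f p = (∫ r in Set.Ioi (0:ℝ), R r) * (∫ θ in Set.Ioo (-π) π, Θ θ) := by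
  rw [← integral_comp_polarCoord_symm f,
    setIntegral_congr_fun polarCoord.open_target.measurableSet h, polarCoord_target,
    Measure.volume_eq_prod]
  exact setIntegral_prod_mul R Θ _ _

lemma gpdf_polar (r θ : ℝ) :
    gaussianPDFReal 0 1 (r * Real.cos θ) * gaussianPDFReal 0 1 (r * Real.sin θ)
      = (2*π)⁻¹ * Real.exp (-r^2/2) := by
  simp only [gaussianPDFReal]
  push_cast
  rw [mul_one, mul_mul_mul_comm, ← Real.exp_add]
  have h1 : √(2*π) * √(2*π) = 2*π := Real.mul_self_sqrt (by positivity)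
  have h2 : -(r * Real.cos θ - 0)^2/(2*1) + -(r * Real.sin θ - 0)^2/(2*1) = -r^2/2 := by
    have := Real.sin_sq_add_cos_sq θ
    nlinarith [Real.sin_sq_add_cos_sq θ]
  rw [← mul_inv, h1, h2]

lemma ang1' : ∫ θ in (-π)..π, |Real.sin θ| = 4 := by
  have := ang1 (α := 0) le_rfl Real.pi_pos.le
  simpa using this

theorem cov_abs_bivariate_gaussian
    {Ω : Type*} [MeasurableSpace Ω] (μ : Measure Ω) [IsProbabilityMeasure μ]
    (Z₁ Z₂ : Ω → ℝ) (hZ₁ : Measurable Z₁) (hZ₂ : Measurable Z₂)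
    (hZ₁law : Measure.map Z₁ μ = gaussianReal 0 1)
    (hZ₂law : Measure.map Z₂ μ = gaussianReal 0 1)
    (hindep : IndepFun Z₁ Z₂ μ)
    (ρ : ℝ) (hρ : ρ ∈ Set.Icc (-1 : ℝ) 1)
    (X Y : Ω → ℝ)
    (hX : X = fun ω => Real.sqrt (1 - ρ ^ 2) * Z₁ ω + ρ * Z₂ ω)
    (hY : Y = Z₂) :
    (∫ ω, |X ω| * |Y ω| ∂μ) - (∫ ω, |X ω| ∂μ) * (∫ ω, |Y ω| ∂μ) =
      (2 / π) * (ρ * arcsin ρ + Real.sqrt (1 - ρ ^ 2) - 1) := by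
  obtain ⟨hρ1, hρ2⟩ := hρ
  have pi_pos := Real.pi_pos
  set s : ℝ := Real.sqrt (1 - ρ^2) with hs
  set α : ℝ := Real.arccos ρ with hα
  have hα0 : 0 ≤ α := Real.arccos_nonneg ρ
  have hαπ : α ≤ π := Real.arccos_le_pi ρ
  have hsinα : Real.sin α = s := Real.sin_arccos ρ
  have hcosα : Real.cos α = ρ := Real.cos_arccos hρ1 hρ2
  have hmap : μ.map (fun ω => (Z₁ ω, Z₂ ω)) = (gaussianReal 0 1).prod (gaussianReal 0 1) := by
    rw [(ProbabilityTheory.indepFun_iff_map_prod_eq_prod_map_map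
      hZ₁.aemeasurable hZ₂.aemeasurable).mp hindep, hZ₁law, hZ₂law]
  have hpair : AEMeasurable (fun ω => (Z₁ ω, Z₂ ω)) μ := (hZ₁.prodMk hZ₂).aemeasurable
  have base : ∀ f : ℝ×ℝ → ℝ, Measurable f →
      ∫ ω, f (Z₁ ω, Z₂ ω) ∂μ
        = ∫ p : ℝ×ℝ, f p * (gaussianPDFReal 0 1 p.1 * gaussianPDFReal 0 1 p.2) := by
    intro f hf
    rw [← MeasureTheory.integral_map hpair hf.aestronglyMeasurable, hmap, integral_gauss_prod]
  have hcomb : ∀ θ : ℝ, s * Real.cos θ + ρ * Real.sin θ = Real.sin (θ + α) := by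
    intro θ; rw [Real.sin_add, hsinα, hcosα]; ring
  have hIoo : ∀ g : ℝ → ℝ, ∫ θ in Set.Ioo (-π) π, g θ = ∫ θ in (-π)..π, g θ := by
    intro g
    rw [intervalIntegral.integral_of_le (by linarith), MeasureTheory.integral_Ioc_eq_integral_Ioo]
  -- E|XY|
  have hXY : ∫ ω, |X ω| * |Y ω| ∂μ
      = 2 * ((2*π)⁻¹ * (2 * s + (π - 2*α) * ρ)) := by
    have h0 : (∫ ω, |X ω| * |Y ω| ∂μ)
        = ∫ ω, (fun p : ℝ×ℝ => |s * p.1 + ρ * p.2| * |p.2|) (Z₁ ω, Z₂ ω) ∂μ := by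
      rw [hX, hY]
    rw [h0, base (fun p : ℝ×ℝ => |s * p.1 + ρ * p.2| * |p.2|) (by fun_prop)]
    have hps := polar_split
      (fun p : ℝ×ℝ => |s * p.1 + ρ * p.2| * |p.2|
        * (gaussianPDFReal 0 1 p.1 * gaussianPDFReal 0 1 p.2))
      (fun r => r ^ 3 * Real.exp (-r^2/2))
      (fun θ => (2*π)⁻¹ * (|Real.sin (θ + α)| * |Real.sin θ|)) ?_
    · rw [hps, rad3, hIoo, intervalIntegral.integral_const_mul, ang2 hα0 hαπ, hsinα, hcosα]
    · rintro ⟨r, θ⟩ hp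
      rw [polarCoord_target] at hp
      obtain ⟨hr, -⟩ := hp
      have hr' : (0:ℝ) < r := hr
      simp only [polarCoord_symm_apply, smul_eq_mul]
      rw [gpdf_polar,
        show s * (r * Real.cos θ) + ρ * (r * Real.sin θ)
          = r * (s * Real.cos θ + ρ * Real.sin θ) by ring,
        hcomb, abs_mul, abs_mul, abs_of_pos hr']
      ring
  -- E|X|
  have hEX : ∫ ω, |X ω| ∂μ = Real.sqrt (2*π) / 2 * ((2*π)⁻¹ * 4) := by
    have h0 : (∫ ω, |X ω| ∂μ)
        = ∫ ω, (fun p : ℝ×ℝ => |s * p.1 + ρ * p.2|) (Z₁ ω, Z₂ ω) ∂μ := by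
      rw [hX]
    rw [h0, base (fun p : ℝ×ℝ => |s * p.1 + ρ * p.2|) (by fun_prop)]
    have hps := polar_split
      (fun p : ℝ×ℝ => |s * p.1 + ρ * p.2|
        * (gaussianPDFReal 0 1 p.1 * gaussianPDFReal 0 1 p.2))
      (fun r => r ^ 2 * Real.exp (-r^2/2))
      (fun θ => (2*π)⁻¹ * |Real.sin (θ + α)|) ?_
    · rw [hps, rad2, hIoo, intervalIntegral.integral_const_mul, ang1 hα0 hαπ]
    · rintro ⟨r, θ⟩ hp
      rw [polarCoord_target] at hp
      obtain ⟨hr, -⟩ := hp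
      have hr' : (0:ℝ) < r := hr
      simp only [polarCoord_symm_apply, smul_eq_mul]
      rw [gpdf_polar,
        show s * (r * Real.cos θ) + ρ * (r * Real.sin θ)
          = r * (s * Real.cos θ + ρ * Real.sin θ) by ring,
        hcomb, abs_mul, abs_of_pos hr']
      ring
  -- E|Y|
  have hEY : ∫ ω, |Y ω| ∂μ = Real.sqrt (2*π) / 2 * ((2*π)⁻¹ * 4) := by
    have h0 : (∫ ω, |Y ω| ∂μ)
        = ∫ ω, (fun p : ℝ×ℝ => |p.2|) (Z₁ ω, Z₂ ω) ∂μ := by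
      rw [hY]
    rw [h0, base (fun p : ℝ×ℝ => |p.2|) (by fun_prop)]
    have hps := polar_split
      (fun p : ℝ×ℝ => |p.2| * (gaussianPDFReal 0 1 p.1 * gaussianPDFReal 0 1 p.2))
      (fun r => r ^ 2 * Real.exp (-r^2/2))
      (fun θ => (2*π)⁻¹ * |Real.sin θ|) ?_
    · rw [hps, rad2, hIoo, intervalIntegral.integral_const_mul, ang1']
    · rintro ⟨r, θ⟩ hp
      rw [polarCoord_target] at hp
      obtain ⟨hr, -⟩ := hp
      have hr' : (0:ℝ) < r := hr
      simp only [polarCoord_symm_apply, smul_eq_mul]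
      rw [gpdf_polar, abs_mul, abs_of_pos hr']
      ring
  rw [hXY, hEX, hEY]
  have harc : π - 2*α = 2 * Real.arcsin ρ := by
    rw [hα, Real.arccos_eq_pi_div_two_sub_arcsin]; ring
  rw [harc]
  have h2π : Real.sqrt (2*π) * Real.sqrt (2*π) = 2*π := Real.mul_self_sqrt (by positivity)
  have hprod : (Real.sqrt (2*π) / 2 * ((2*π)⁻¹ * 4)) * (Real.sqrt (2*π) / 2 * ((2*π)⁻¹ * 4))
      = 2 / π := by
    rw [show Real.sqrt (2*π) / 2 * ((2*π)⁻¹ * 4) = Real.sqrt (2*π) * π⁻¹ by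
      field_simp; ring]
    rw [mul_mul_mul_comm, h2π]
    field_simp
  rw [hprod]
  field_simp
  ring
end

section
/- Let X₁,…,Xₙ be an i.i.d. sample with bounded density f_l on a neighborhood of a bounded set C, let K be a bounded compactly supported kernel, and define g_n(x) = (1/(n(n−1)h^{2d})) Σ_{i≠j} K((x−Xᵢ)/h)K((x−X_j)/h). Then sup_{x∈C} E|g_n(x) − (E f_n(x))²| = O(1/√(n h^{3d})), where E f_n(x) = h^{-d} E K((x−X)/h). -/
set_option maxHeartbeats 1000000

open MeasureTheory ProbabilityTheory

lemma aux_integrable_of_bdd {Ω : Type*} [MeasurableSpace Ω] (μ : Measure Ω) [IsFiniteMeasure μ]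
    {g : Ω → ℝ} (hm : AEStronglyMeasurable g μ) (M : ℝ) (hM : ∀ ω, |g ω| ≤ M) :
    Integrable g μ :=
  (integrable_const M).mono' hm (Filter.Eventually.of_forall
    (fun ω => by simpa [Real.norm_eq_abs] using hM ω))

lemma aux_sq_integral_le {Ω : Type*} [MeasurableSpace Ω] (μ : Measure Ω) [IsProbabilityMeasure μ]
    (g : Ω → ℝ) (hg : Integrable g μ) (hg2 : Integrable (fun ω => g ω ^ 2) μ) :
    (∫ ω, g ω ∂μ) ^ 2 ≤ ∫ ω, g ω ^ 2 ∂μ := by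
  set c := ∫ ω, g ω ∂μ with hc
  have key : ∫ ω, (g ω - c) ^ 2 ∂μ = (∫ ω, g ω ^ 2 ∂μ) - c ^ 2 := by
    have e : ∀ ω, (g ω - c) ^ 2 = g ω ^ 2 - 2 * c * g ω + c ^ 2 := fun ω => by ring
    simp only [e]
    rw [integral_add (f := fun ω => g ω ^ 2 - 2 * c * g ω) (g := fun _ => c ^ 2)
        (hg2.sub (hg.const_mul (2 * c))) (integrable_const _),
      integral_sub (f := fun ω => g ω ^ 2) (g := fun ω => 2 * c * g ω) hg2
        (hg.const_mul (2 * c)), MeasureTheory.integral_const_mul, integral_const]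
    simp [← hc]
    ring
  have h0 : 0 ≤ ∫ ω, (g ω - c) ^ 2 ∂μ := integral_nonneg (fun ω => sq_nonneg _)
  linarith [key ▸ h0]

theorem ustat_kernel_product_bias_bound
    {Ω : Type*} [MeasurableSpace Ω] (μ : Measure Ω) [IsProbabilityMeasure μ]
    (d : ℕ) (hd : 0 < d)
    (X : ℕ → Ω → (Fin d → ℝ)) (hXmeas : ∀ i, Measurable (X i))
    (hXindep : iIndepFun X μ)
    (f : (Fin d → ℝ) → ℝ) (hf_meas : Measurable f) (hf_nonneg : ∀ u, 0 ≤ f u)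
    (hlaw : ∀ i, Measure.map (X i) μ =
      volume.withDensity (fun u => ENNReal.ofReal (f u)))
    (K : (Fin d → ℝ) → ℝ) (hK_meas : Measurable K) (hK_nonneg : ∀ u, 0 ≤ K u)
    (hK_bdd : ∃ BK, ∀ u, K u ≤ BK)
    (hK_supp : ∀ u : Fin d → ℝ, ‖u‖ > 1 / 2 → K u = 0)
    (h : ℕ → ℝ) (hh : ∀ n, 0 < h n)
    (C : Set (Fin d → ℝ)) (hC : Bornology.IsBounded C)
    (B : ℝ) (hfB : ∀ n, ∀ x ∈ Metric.thickening (h n / 2) C, f x ≤ B)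
    (g : ℕ → (Fin d → ℝ) → Ω → ℝ)
    (hg : g = fun n x ω => (1 / (n * (n - 1) * (h n) ^ (2 * d))) *
      ∑ i ∈ Finset.range n, ∑ j ∈ (Finset.range n).erase i,
        K ((h n)⁻¹ • (x - X i ω)) * K ((h n)⁻¹ • (x - X j ω)))
    (Efn : ℕ → (Fin d → ℝ) → ℝ)
    (hEfn : Efn = fun n x => ((h n) ^ d)⁻¹ * ∫ u, K ((h n)⁻¹ • (x - u)) * f u) :
    ∃ c : ℝ, ∀ n, 2 ≤ n → ∀ x ∈ C,
      (∫ ω, |g n x ω - (Efn n x) ^ 2| ∂μ) ≤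
        c / Real.sqrt (n * (h n) ^ (3 * d)) := by
  obtain ⟨BK, hBK⟩ := hK_bdd
  have hBK0 : 0 ≤ BK := le_trans (hK_nonneg 0) (hBK 0)
  rcases C.eq_empty_or_nonempty with hCe | ⟨x₀, hx₀⟩
  · exact ⟨0, fun n _ x hx => absurd hx (by simp [hCe])⟩
  have hB0 : 0 ≤ B := by
    refine le_trans (hf_nonneg x₀) (hfB 0 x₀ ?_)
    exact Metric.self_subset_thickening (half_pos (hh 0)) C hx₀
  -- law of X i: basic facts about f
  have hprob : IsProbabilityMeasure (volume.withDensity fun u => ENNReal.ofReal (f u)) := by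
    rw [← hlaw 0]; exact Measure.isProbabilityMeasure_map (hXmeas 0).aemeasurable
  have hlint : ∫⁻ u, ENNReal.ofReal (f u) = 1 := by
    have := hprob.measure_univ
    rwa [withDensity_apply _ MeasurableSet.univ, setLIntegral_univ] at this
  have hf_int : Integrable f := by
    refine ⟨hf_meas.aestronglyMeasurable, ?_⟩
    rw [hasFiniteIntegral_iff_ofReal (Filter.Eventually.of_forall hf_nonneg), hlint]
    exact ENNReal.one_lt_top
  have hf_sum : ∫ u, f u = 1 := by
    rw [integral_eq_lintegral_of_nonneg_ae (Filter.Eventually.of_forall hf_nonneg)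
      hf_meas.aestronglyMeasurable, hlint, ENNReal.toReal_one]
  -- transfer lemma
  have transfer : ∀ (G : (Fin d → ℝ) → ℝ), Measurable G → ∀ i : ℕ,
      ∫ ω, G (X i ω) ∂μ = ∫ u, G u * f u := by
    intro G hG i
    rw [← integral_map (hXmeas i).aemeasurable hG.aestronglyMeasurable, hlaw i]
    have e : (volume.withDensity fun u => ENNReal.ofReal (f u))
        = volume.withDensity fun u => (((f u).toNNReal : NNReal) : ENNReal) := rfl
    rw [e, integral_withDensity_eq_integral_smul hf_meas.real_toNNReal G]
    congr 1; funext u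
    simp [NNReal.smul_def, Real.coe_toNNReal _ (hf_nonneg u), mul_comm]
  -- constants
  set Vd : ℝ := (volume (Metric.ball (0 : Fin d → ℝ) 1)).toReal with hVddef
  have hVd0 : 0 ≤ Vd := ENNReal.toReal_nonneg
  set cB : ℝ := BK * B * Vd with hcBdef
  have hcB0 : 0 ≤ cB := by positivity
  set κ : ℝ := BK * Real.sqrt (BK * cB) with hκdef
  have hκ0 : 0 ≤ κ := by positivity
  refine ⟨6 * κ, fun n hn x hx => ?_⟩
  -- basic numeric facts
  have hhn : 0 < h n := hh n
  have hn2R : (2 : ℝ) ≤ (n : ℝ) := by exact_mod_cast hn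
  have hn1R : (1 : ℝ) ≤ (n : ℝ) - 1 := by linarith
  have hn0R : (0 : ℝ) < (n : ℝ) := by linarith
  set q : ℝ := Real.sqrt (h n ^ d) with hqdef
  have hq0 : 0 < q := Real.sqrt_pos.mpr (pow_pos hhn d)
  have hq2 : q ^ 2 = h n ^ d := Real.sq_sqrt (pow_pos hhn d).le
  set sn : ℝ := Real.sqrt (n : ℝ) with hsndef
  have hsn2 : sn ^ 2 = (n : ℝ) := Real.sq_sqrt hn0R.le
  have hsn1 : (1 : ℝ) ≤ sn := by
    rw [hsndef, show (1:ℝ) = Real.sqrt 1 from Real.sqrt_one.symm]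
    exact Real.sqrt_le_sqrt (by linarith)
  -- the kernel translate
  set φ : (Fin d → ℝ) → ℝ := fun u => K ((h n)⁻¹ • (x - u)) with hφdef
  have hφcont : Continuous fun u : Fin d → ℝ => (h n)⁻¹ • (x - u) :=
    by fun_prop
  have hφm : Measurable φ := hK_meas.comp hφcont.measurable
  have hφ0 : ∀ u, 0 ≤ φ u := fun u => hK_nonneg _
  have hφle : ∀ u, φ u ≤ BK := fun u => hBK _
  set P : ℝ := ∫ u, φ u * f u with hPdef
  set m2 : ℝ := ∫ u, φ u ^ 2 * f u with hm2def
  -- integrability on the density side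
  have hφf_int : Integrable (fun u => φ u * f u) := by
    refine (hf_int.const_mul BK).mono' ((hφm.mul hf_meas).aestronglyMeasurable)
      (Filter.Eventually.of_forall fun u => ?_)
    rw [Real.norm_eq_abs, abs_of_nonneg (mul_nonneg (hφ0 u) (hf_nonneg u))]
    exact mul_le_mul_of_nonneg_right (hφle u) (hf_nonneg u)
  have hφ2f_int : Integrable (fun u => φ u ^ 2 * f u) := by
    refine (hf_int.const_mul (BK ^ 2)).mono' (((hφm.pow_const 2).mul hf_meas).aestronglyMeasurable)
      (Filter.Eventually.of_forall fun u => ?_)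
    rw [Real.norm_eq_abs, abs_of_nonneg (mul_nonneg (sq_nonneg _) (hf_nonneg u))]
    exact mul_le_mul_of_nonneg_right
      (pow_le_pow_left₀ (hφ0 u) (hφle u) 2) (hf_nonneg u)
  -- bounds on P and m2
  have hP0 : 0 ≤ P := integral_nonneg fun u => mul_nonneg (hφ0 u) (hf_nonneg u)
  have hP_BK : P ≤ BK := by
    have : P ≤ ∫ u, BK * f u := by
      refine integral_mono hφf_int (hf_int.const_mul BK) fun u => ?_
      exact mul_le_mul_of_nonneg_right (hφle u) (hf_nonneg u)
    rwa [MeasureTheory.integral_const_mul, hf_sum, mul_one] at this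
  have hP_a : P ≤ cB * h n ^ d := by
    have hsph : volume (Metric.sphere x (h n / 2)) = 0 :=
      Measure.addHaar_sphere_of_ne_zero volume x (ne_of_gt (half_pos hhn))
    have hae : ∀ᵐ u : Fin d → ℝ, u ∉ Metric.sphere x (h n / 2) :=
      measure_eq_zero_iff_ae_notMem.mp hsph
    have hbound : ∀ᵐ u : Fin d → ℝ, φ u * f u ≤
        Set.indicator (Metric.closedBall x (h n / 2)) (fun _ => BK * B) u := by
      filter_upwards [hae] with u hu
      have hne : dist u x ≠ h n / 2 := fun hc => hu (Metric.mem_sphere.mpr hc)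
      rcases lt_or_gt_of_ne hne with hlt | hgt
      · rw [Set.indicator_of_mem (Metric.mem_closedBall.mpr hlt.le)]
        have hfu : f u ≤ B := hfB n u (Metric.mem_thickening_iff.mpr ⟨x, hx, hlt⟩)
        exact mul_le_mul (hφle u) hfu (hf_nonneg u) hBK0
      · have hnorm : ‖(h n)⁻¹ • (x - u)‖ > 1 / 2 := by
          rw [norm_smul, norm_inv, Real.norm_eq_abs, abs_of_pos hhn]
          have e : ‖x - u‖ = dist u x := by rw [← dist_eq_norm, dist_comm]
          rw [e, gt_iff_lt, inv_mul_eq_div, lt_div_iff₀ hhn]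
          linarith
        have : φ u = 0 := hK_supp _ hnorm
        rw [this, zero_mul]
        exact Set.indicator_nonneg (fun _ _ => by positivity) u
    have hind_int : Integrable
        (Set.indicator (Metric.closedBall x (h n / 2)) (fun _ => BK * B)) := by
      rw [integrable_indicator_iff measurableSet_closedBall]
      exact integrableOn_const measure_closedBall_lt_top.ne
    have h1 : P ≤ (volume (Metric.closedBall x (h n / 2))).toReal • (BK * B) := by
      rw [← measureReal_def, ← integral_indicator_const (BK * B) measurableSet_closedBall]
      exact integral_mono_ae hφf_int hind_int hbound
    have hvol : (volume (Metric.closedBall x (h n / 2))).toReal = (h n / 2) ^ d * Vd := by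
      rw [Measure.addHaar_closedBall volume x (half_pos hhn).le, ENNReal.toReal_mul,
        ENNReal.toReal_ofReal (by positivity), hVddef]
      congr 2
      exact Module.finrank_fin_fun ℝ
    rw [hvol, smul_eq_mul] at h1
    have hpow : (h n / 2) ^ d ≤ h n ^ d :=
      pow_le_pow_left₀ (by positivity) (by linarith) d
    calc P ≤ (h n / 2) ^ d * Vd * (BK * B) := h1
      _ ≤ h n ^ d * Vd * (BK * B) := by
          apply mul_le_mul_of_nonneg_right (mul_le_mul_of_nonneg_right hpow hVd0) (by positivity)
      _ = cB * h n ^ d := by rw [hcBdef]; ring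
  have hm2_le : m2 ≤ BK * P := by
    have : m2 ≤ ∫ u, BK * (φ u * f u) := by
      refine integral_mono hφ2f_int (hφf_int.const_mul BK) fun u => ?_
      have : φ u ^ 2 ≤ BK * φ u := by
        rw [sq]; exact mul_le_mul_of_nonneg_right (hφle u) (hφ0 u)
      calc φ u ^ 2 * f u ≤ (BK * φ u) * f u :=
            mul_le_mul_of_nonneg_right this (hf_nonneg u)
        _ = BK * (φ u * f u) := by ring
    rwa [MeasureTheory.integral_const_mul] at this
  -- random variables
  set ξ : ℕ → Ω → ℝ := fun i ω => φ (X i ω) with hξdef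
  set η : ℕ → Ω → ℝ := fun i ω => ξ i ω - P with hηdef
  set Sη : Ω → ℝ := fun ω => ∑ i ∈ Finset.range n, η i ω with hSdef
  set Qη : Ω → ℝ := fun ω => ∑ i ∈ Finset.range n, (η i ω) ^ 2 with hQdef
  set V : ℝ := m2 - P ^ 2 with hVdef
  have hξm : ∀ i, Measurable (ξ i) := fun i => hφm.comp (hXmeas i)
  have hηm : ∀ i, Measurable (η i) := fun i => (hξm i).sub measurable_const
  have hξbd : ∀ i ω, 0 ≤ ξ i ω ∧ ξ i ω ≤ BK := fun i ω => ⟨hφ0 _, hφle _⟩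
  have hηbd : ∀ i ω, |η i ω| ≤ BK := by
    intro i ω
    have h1 := (hξbd i ω).1
    have h2 := (hξbd i ω).2
    rw [hηdef, abs_le]
    constructor <;> simp <;> linarith
  -- integrability
  have hint_ξ : ∀ i, Integrable (ξ i) μ := fun i =>
    aux_integrable_of_bdd μ (hξm i).aestronglyMeasurable BK (fun ω => by
      rw [abs_of_nonneg (hξbd i ω).1]; exact (hξbd i ω).2)
  have hint_ξsq : ∀ i, Integrable (fun ω => ξ i ω ^ 2) μ := fun i =>
    aux_integrable_of_bdd μ ((hξm i).pow_const 2).aestronglyMeasurable (BK ^ 2) (fun ω => by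
      rw [abs_of_nonneg (sq_nonneg _)]
      exact pow_le_pow_left₀ (hξbd i ω).1 (hξbd i ω).2 2)
  have hint_η : ∀ i, Integrable (η i) μ := fun i =>
    aux_integrable_of_bdd μ (hηm i).aestronglyMeasurable BK (hηbd i)
  have hint_ηsq : ∀ i, Integrable (fun ω => η i ω ^ 2) μ := fun i =>
    aux_integrable_of_bdd μ ((hηm i).pow_const 2).aestronglyMeasurable (BK ^ 2) (fun ω => by
      rw [abs_of_nonneg (sq_nonneg _), ← sq_abs]
      exact pow_le_pow_left₀ (abs_nonneg _) (hηbd i ω) 2)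
  have hint_ηη : ∀ i j, Integrable (fun ω => η i ω * η j ω) μ := fun i j =>
    aux_integrable_of_bdd μ ((hηm i).mul (hηm j)).aestronglyMeasurable (BK * BK) (fun ω => by
      rw [abs_mul]
      exact mul_le_mul (hηbd i ω) (hηbd j ω) (abs_nonneg _) hBK0)
  have hSm : Measurable Sη := by
    rw [hSdef]; exact Finset.measurable_sum _ (fun i _ => hηm i)
  have hSbd : ∀ ω, |Sη ω| ≤ n * BK := by
    intro ω
    rw [hSdef]
    calc |∑ i ∈ Finset.range n, η i ω| ≤ ∑ i ∈ Finset.range n, |η i ω| :=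
          Finset.abs_sum_le_sum_abs _ _
      _ ≤ ∑ _i ∈ Finset.range n, BK := Finset.sum_le_sum fun i _ => hηbd i ω
      _ = n * BK := by rw [Finset.sum_const, Finset.card_range, nsmul_eq_mul]
  have hint_S : Integrable Sη μ :=
    aux_integrable_of_bdd μ hSm.aestronglyMeasurable (n * BK) hSbd
  have hint_Ssq : Integrable (fun ω => Sη ω ^ 2) μ :=
    aux_integrable_of_bdd μ (hSm.pow_const 2).aestronglyMeasurable ((n * BK) ^ 2) (fun ω => by
      rw [abs_of_nonneg (sq_nonneg _), ← sq_abs]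
      exact pow_le_pow_left₀ (abs_nonneg _) (hSbd ω) 2)
  have hint_Q : Integrable Qη μ := by
    rw [hQdef]
    exact integrable_finset_sum _ (fun i _ => hint_ηsq i)
  have hint_absS : Integrable (fun ω => |Sη ω|) μ := hint_S.abs
  -- moments
  have hmom1 : ∀ i, ∫ ω, ξ i ω ∂μ = P := fun i => transfer φ hφm i
  have hmom2 : ∀ i, ∫ ω, ξ i ω ^ 2 ∂μ = m2 := fun i =>
    transfer (fun u => φ u ^ 2) (hφm.pow_const 2) i
  have hηmean : ∀ i, ∫ ω, η i ω ∂μ = 0 := by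
    intro i
    have : ∫ ω, η i ω ∂μ = (∫ ω, ξ i ω ∂μ) - P := by
      rw [hηdef, integral_sub (hint_ξ i) (integrable_const P), integral_const]
      simp
    rw [this, hmom1 i, sub_self]
  have hηsqV : ∀ i, ∫ ω, η i ω ^ 2 ∂μ = V := by
    intro i
    have e : ∀ ω, η i ω ^ 2 = ξ i ω ^ 2 - 2 * P * ξ i ω + P ^ 2 := fun ω => by
      rw [hηdef]; ring
    simp only [e]
    rw [integral_add (f := fun ω => ξ i ω ^ 2 - 2 * P * ξ i ω) (g := fun _ => P ^ 2)
        ((hint_ξsq i).sub ((hint_ξ i).const_mul (2 * P))) (integrable_const _),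
      integral_sub (f := fun ω => ξ i ω ^ 2) (g := fun ω => 2 * P * ξ i ω) (hint_ξsq i)
        ((hint_ξ i).const_mul (2 * P)), MeasureTheory.integral_const_mul, hmom1 i, hmom2 i,
      integral_const]
    simp [hVdef]
    ring
  have hV0 : 0 ≤ V := (hηsqV 0) ▸ integral_nonneg (fun ω => sq_nonneg _)
  have hV_le : V ≤ BK * P := by
    rw [hVdef]
    have := sq_nonneg P
    linarith
  -- independence: cross terms vanish
  have hcross : ∀ i j, i ≠ j → ∫ ω, η i ω * η j ω ∂μ = 0 := by
    intro i j hij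
    have hψ : Measurable (fun u => φ u - P) := hφm.sub measurable_const
    have hind : IndepFun (η i) (η j) μ := (hXindep.indepFun hij).comp hψ hψ
    have e : ∫ ω, η i ω * η j ω ∂μ = (∫ ω, η i ω ∂μ) * ∫ ω, η j ω ∂μ :=
      IndepFun.integral_mul_eq_mul_integral hind (hint_η i).aestronglyMeasurable (hint_η j).aestronglyMeasurable
    rw [e, hηmean i, zero_mul]
  -- second moment of the centered sum
  have hSsq_int : ∫ ω, Sη ω ^ 2 ∂μ = n * V := by
    have e : ∀ ω, Sη ω ^ 2 = ∑ i ∈ Finset.range n, ∑ j ∈ Finset.range n, η i ω * η j ω := by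
      intro ω
      rw [hSdef, sq, Finset.sum_mul_sum]
    simp only [e]
    rw [integral_finset_sum _ (fun i _ =>
      integrable_finset_sum (μ := μ) _ (fun j _ => hint_ηη i j))]
    have row : ∀ i ∈ Finset.range n,
        (∫ ω, ∑ j ∈ Finset.range n, η i ω * η j ω ∂μ) = V := by
      intro i hi
      rw [integral_finset_sum _ (fun j _ => hint_ηη i j)]
      rw [Finset.sum_eq_single_of_mem i hi (fun j _ hji => hcross i j (Ne.symm hji))]
      rw [show (fun ω => η i ω * η i ω) = fun ω => η i ω ^ 2 from funext fun ω => (sq _).symm]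
      exact hηsqV i
    rw [Finset.sum_congr rfl row, Finset.sum_const, Finset.card_range, nsmul_eq_mul]
  have hQint : ∫ ω, Qη ω ∂μ = n * V := by
    rw [hQdef, integral_finset_sum _ (fun i _ => hint_ηsq i)]
    rw [Finset.sum_congr rfl (fun i _ => hηsqV i), Finset.sum_const, Finset.card_range,
      nsmul_eq_mul]
  -- L¹ bound on |Sη|
  have habsS : ∫ ω, |Sη ω| ∂μ ≤ Real.sqrt (n * V) := by
    have h1 : (∫ ω, |Sη ω| ∂μ) ^ 2 ≤ ∫ ω, Sη ω ^ 2 ∂μ := by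
      have := aux_sq_integral_le μ (fun ω => |Sη ω|) hint_absS
        (by simpa [sq_abs] using hint_Ssq)
      simpa [sq_abs] using this
    have h2 : (∫ ω, |Sη ω| ∂μ) ^ 2 ≤ (n : ℝ) * V := h1.trans_eq hSsq_int
    calc ∫ ω, |Sη ω| ∂μ = Real.sqrt ((∫ ω, |Sη ω| ∂μ) ^ 2) :=
          (Real.sqrt_sq (integral_nonneg fun ω => abs_nonneg _)).symm
      _ ≤ Real.sqrt ((n : ℝ) * V) := Real.sqrt_le_sqrt h2
  -- rewrite g and Efn
  have hEfnP : Efn n x = ((h n) ^ d)⁻¹ * P := by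
    simp only [hEfn]
    rfl
  have hgP : ∀ ω, g n x ω = (1 / ((n : ℝ) * ((n : ℝ) - 1) * (h n) ^ (2 * d))) *
      ∑ i ∈ Finset.range n, ∑ j ∈ (Finset.range n).erase i, ξ i ω * ξ j ω := by
    intro ω
    simp only [hg]
    rfl
  -- pointwise decomposition
  have hkey : ∀ ω, g n x ω - Efn n x ^ 2 =
      (Sη ω ^ 2 - Qη ω + 2 * ((n : ℝ) - 1) * P * Sη ω) /
        (((n : ℝ) * ((n : ℝ) - 1)) * (h n) ^ (2 * d)) := by
    intro ω
    rw [hgP ω, hEfnP]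
    have hsum : (∑ i ∈ Finset.range n, ∑ j ∈ (Finset.range n).erase i, ξ i ω * ξ j ω)
        = (∑ i ∈ Finset.range n, ξ i ω) ^ 2 - ∑ i ∈ Finset.range n, ξ i ω ^ 2 := by
      have inner : ∀ i ∈ Finset.range n,
          (∑ j ∈ (Finset.range n).erase i, ξ i ω * ξ j ω)
            = (∑ j ∈ Finset.range n, ξ i ω * ξ j ω) - ξ i ω ^ 2 := by
        intro i hi
        have e' : ξ i ω * ξ i ω + ∑ j ∈ (Finset.range n).erase i, ξ i ω * ξ j ω
            = ∑ j ∈ Finset.range n, ξ i ω * ξ j ω :=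
          Finset.add_sum_erase (Finset.range n) (fun j => ξ i ω * ξ j ω) hi
        have e2 : ξ i ω * ξ i ω = ξ i ω ^ 2 := (sq _).symm
        linarith [e']
      rw [Finset.sum_congr rfl inner, Finset.sum_sub_distrib, ← Finset.sum_mul_sum, sq]
    rw [hsum]
    have hSη : Sη ω = (∑ i ∈ Finset.range n, ξ i ω) - n * P := by
      rw [hSdef]
      simp only [hηdef]
      rw [Finset.sum_sub_distrib, Finset.sum_const, Finset.card_range, nsmul_eq_mul]
    have hQη : Qη ω = (∑ i ∈ Finset.range n, ξ i ω ^ 2)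
        - 2 * P * (∑ i ∈ Finset.range n, ξ i ω) + n * P ^ 2 := by
      rw [hQdef]
      simp only [hηdef]
      have e : ∀ i, (ξ i ω - P) ^ 2 = ξ i ω ^ 2 - 2 * P * ξ i ω + P ^ 2 := fun i => by ring
      simp only [e]
      rw [Finset.sum_add_distrib, Finset.sum_sub_distrib, ← Finset.mul_sum,
        Finset.sum_const, Finset.card_range, nsmul_eq_mul]
    rw [hSη, hQη]
    have hq4 : (h n) ^ (2 * d) = ((h n) ^ d) ^ 2 := by rw [mul_comm, pow_mul]
    rw [hq4]
    have hNne : ((n : ℝ) * ((n : ℝ) - 1)) ≠ 0 :=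
      ne_of_gt (mul_pos hn0R (by linarith))
    have hhdne : ((h n) ^ d) ≠ 0 := ne_of_gt (pow_pos hhn d)
    field_simp
    ring
  -- denominator
  set den : ℝ := ((n : ℝ) * ((n : ℝ) - 1)) * (h n) ^ (2 * d) with hdendef
  have hden : 0 < den := by
    rw [hdendef]
    exact mul_pos (mul_pos hn0R (by linarith)) (pow_pos hhn _)
  set cc : ℝ := 2 * ((n : ℝ) - 1) * P with hccdef
  have hcc0 : 0 ≤ cc := by
    rw [hccdef]
    have h2 : (0:ℝ) ≤ (n : ℝ) - 1 := by linarith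
    positivity
  -- main integral bound
  have hmain : (∫ ω, |g n x ω - Efn n x ^ 2| ∂μ) ≤
      (2 * (n : ℝ) * V + cc * Real.sqrt ((n : ℝ) * V)) / den := by
    have hQ0 : ∀ ω, 0 ≤ Qη ω := by
      intro ω; rw [hQdef]; exact Finset.sum_nonneg fun i _ => sq_nonneg _
    have hptw : ∀ ω, |g n x ω - Efn n x ^ 2| ≤
        (Sη ω ^ 2 + Qη ω + cc * |Sη ω|) / den := by
      intro ω
      rw [hkey ω, abs_div, abs_of_pos hden]
      have hnum : |Sη ω ^ 2 - Qη ω + cc * Sη ω| ≤ Sη ω ^ 2 + Qη ω + cc * |Sη ω| :=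
        calc |Sη ω ^ 2 - Qη ω + cc * Sη ω| ≤ |Sη ω ^ 2 - Qη ω| + |cc * Sη ω| := abs_add_le _ _
          _ ≤ (|Sη ω ^ 2| + |Qη ω|) + |cc * Sη ω| := add_le_add_left (abs_sub _ _) _
          _ = Sη ω ^ 2 + Qη ω + cc * |Sη ω| := by
              rw [abs_of_nonneg (sq_nonneg _), abs_of_nonneg (hQ0 ω), abs_mul,
                abs_of_nonneg hcc0]
      gcongr
    have hint_rhs : Integrable (fun ω => (Sη ω ^ 2 + Qη ω + cc * |Sη ω|) / den) μ :=
      (((hint_Ssq.add hint_Q).add (hint_absS.const_mul cc)).div_const den)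
    have hint_lhs : Integrable (fun ω => |g n x ω - Efn n x ^ 2|) μ := by
      have : Integrable (fun ω => (Sη ω ^ 2 - Qη ω + cc * Sη ω) / den) μ :=
        (((hint_Ssq.sub hint_Q).add (hint_S.const_mul cc)).div_const den)
      refine (this.abs.congr (Filter.Eventually.of_forall fun ω => ?_))
      show |(Sη ω ^ 2 - Qη ω + cc * Sη ω) / den| = |g n x ω - Efn n x ^ 2|
      rw [hkey ω]
    calc (∫ ω, |g n x ω - Efn n x ^ 2| ∂μ)
        ≤ ∫ ω, (Sη ω ^ 2 + Qη ω + cc * |Sη ω|) / den ∂μ :=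
          integral_mono hint_lhs hint_rhs hptw
      _ = ((∫ ω, Sη ω ^ 2 ∂μ) + (∫ ω, Qη ω ∂μ) + cc * ∫ ω, |Sη ω| ∂μ) / den := by
          rw [integral_div, integral_add (f := fun ω => Sη ω ^ 2 + Qη ω)
            (g := fun ω => cc * |Sη ω|) (hint_Ssq.add hint_Q) (hint_absS.const_mul cc),
            integral_add hint_Ssq hint_Q, MeasureTheory.integral_const_mul]
      _ ≤ (2 * (n : ℝ) * V + cc * Real.sqrt ((n : ℝ) * V)) / den := by
          rw [hSsq_int, hQint]
          have hnum2 : (n : ℝ) * V + (n : ℝ) * V + cc * ∫ ω, |Sη ω| ∂μ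
              ≤ 2 * (n : ℝ) * V + cc * Real.sqrt ((n : ℝ) * V) := by
            have := mul_le_mul_of_nonneg_left habsS hcc0
            linarith
          gcongr
  -- numeric endgame
  have hrhs : Real.sqrt ((n : ℝ) * (h n) ^ (3 * d)) = sn * q ^ 3 := by
    rw [Real.sqrt_mul hn0R.le, ← hsndef]
    congr 1
    have e3 : (h n) ^ (3 * d) = (q ^ 3) ^ 2 := by
      rw [mul_comm 3 d, pow_mul, ← hq2]; ring
    rw [e3, Real.sqrt_sq (by positivity)]
  have hPq : P ≤ Real.sqrt (BK * cB) * q := by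
    have h1 : P ^ 2 ≤ (BK * cB) * q ^ 2 := by
      rw [hq2, sq]
      calc P * P ≤ BK * (cB * h n ^ d) :=
            mul_le_mul hP_BK hP_a hP0 hBK0
        _ = BK * cB * h n ^ d := by ring
    calc P = Real.sqrt (P ^ 2) := (Real.sqrt_sq hP0).symm
      _ ≤ Real.sqrt ((BK * cB) * q ^ 2) := Real.sqrt_le_sqrt h1
      _ = Real.sqrt (BK * cB) * q := by
          rw [Real.sqrt_mul (by positivity), Real.sqrt_sq hq0.le]
  have hVq : V ≤ κ * q := by
    calc V ≤ BK * P := hV_le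
      _ ≤ BK * (Real.sqrt (BK * cB) * q) := mul_le_mul_of_nonneg_left hPq hBK0
      _ = κ * q := by rw [hκdef]; ring
  have hPVq : P * Real.sqrt V ≤ κ * q := by
    have h1 : (P * Real.sqrt V) ^ 2 ≤ (κ * q) ^ 2 := by
      have hsV : (Real.sqrt V) ^ 2 = V := Real.sq_sqrt hV0
      have hκ2 : κ ^ 2 = BK ^ 2 * (BK * cB) := by
        rw [hκdef, mul_pow, Real.sq_sqrt (by positivity)]
      rw [mul_pow, hsV, mul_pow, hκ2, hq2]
      calc P ^ 2 * V ≤ P ^ 2 * (BK * P) := mul_le_mul_of_nonneg_left hV_le (sq_nonneg P)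
        _ = BK * (P ^ 2 * P) := by ring
        _ ≤ BK * (BK ^ 2 * (cB * h n ^ d)) := by
            refine mul_le_mul_of_nonneg_left ?_ hBK0
            exact mul_le_mul (pow_le_pow_left₀ hP0 hP_BK 2) hP_a hP0 (by positivity)
        _ = BK ^ 2 * (BK * cB) * h n ^ d := by ring
    calc P * Real.sqrt V = Real.sqrt ((P * Real.sqrt V) ^ 2) :=
          (Real.sqrt_sq (by positivity)).symm
      _ ≤ Real.sqrt ((κ * q) ^ 2) := Real.sqrt_le_sqrt h1
      _ = κ * q := Real.sqrt_sq (by positivity)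
  have hsn_le : sn ≤ 2 * ((n : ℝ) - 1) := by
    have h1 : sn * 1 ≤ sn * sn := mul_le_mul_of_nonneg_left hsn1 (by linarith)
    have h2 : sn * sn = (n : ℝ) := by rw [← hsn2]; ring
    linarith
  -- put it together
  rw [hrhs]
  refine hmain.trans ?_
  have hnV : Real.sqrt ((n : ℝ) * V) = sn * Real.sqrt V := by
    rw [Real.sqrt_mul hn0R.le, ← hsndef]
  rw [hnV, hdendef, hccdef]
  have hq4 : (h n) ^ (2 * d) = q ^ 4 := by
    rw [mul_comm 2 d, pow_mul, ← hq2]; ring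
  rw [hq4, div_le_div_iff₀ (mul_pos (mul_pos hn0R (by linarith)) (pow_pos hq0 4)) (mul_pos (Real.sqrt_pos.mpr hn0R) (pow_pos hq0 3))]
  have hsV0 : 0 ≤ Real.sqrt V := Real.sqrt_nonneg V
  have expand : (2 * (n : ℝ) * V + 2 * ((n : ℝ) - 1) * P * (sn * Real.sqrt V)) * (sn * q ^ 3)
      = (2 * (n : ℝ) * sn * q ^ 3) * V
        + (2 * ((n : ℝ) - 1) * (n : ℝ) * q ^ 3) * (P * Real.sqrt V) := by
    linear_combination (2 * ((n : ℝ) - 1) * P * Real.sqrt V * q ^ 3) * hsn2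
  rw [expand]
  have hc1 : (0:ℝ) ≤ 2 * (n : ℝ) * sn * q ^ 3 := by positivity
  have hc2 : (0:ℝ) ≤ 2 * ((n : ℝ) - 1) * (n : ℝ) * q ^ 3 := by
    have h2 : (0:ℝ) ≤ (n : ℝ) - 1 := by linarith
    positivity
  have t1 : (2 * (n : ℝ) * sn * q ^ 3) * V ≤ (2 * (n : ℝ) * sn * q ^ 3) * (κ * q) :=
    mul_le_mul_of_nonneg_left hVq hc1
  have t2 : (2 * ((n : ℝ) - 1) * (n : ℝ) * q ^ 3) * (P * Real.sqrt V)
      ≤ (2 * ((n : ℝ) - 1) * (n : ℝ) * q ^ 3) * (κ * q) :=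
    mul_le_mul_of_nonneg_left hPVq hc2
  have t3 : (2 * (n : ℝ) * sn * q ^ 3) * (κ * q) + (2 * ((n : ℝ) - 1) * (n : ℝ) * q ^ 3) * (κ * q)
      ≤ 6 * κ * ((n : ℝ) * ((n : ℝ) - 1) * q ^ 4) := by
    have hfin : 2 * (n : ℝ) * sn + 2 * ((n : ℝ) - 1) * (n : ℝ) ≤ 6 * ((n : ℝ) * ((n : ℝ) - 1)) := by
      have h1 : (2 * (n : ℝ)) * sn ≤ (2 * (n : ℝ)) * (2 * ((n : ℝ) - 1)) :=
        mul_le_mul_of_nonneg_left hsn_le (by linarith)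
      linarith only [h1]
    have hq4nn : (0:ℝ) ≤ κ * q ^ 4 := by positivity
    have h2 := mul_le_mul_of_nonneg_left hfin hq4nn
    nlinarith only [h2]
  calc (2 * (n : ℝ) * sn * q ^ 3) * V + (2 * ((n : ℝ) - 1) * (n : ℝ) * q ^ 3) * (P * Real.sqrt V)
      ≤ (2 * (n : ℝ) * sn * q ^ 3) * (κ * q) + (2 * ((n : ℝ) - 1) * (n : ℝ) * q ^ 3) * (κ * q) :=
        add_le_add t1 t2
    _ ≤ 6 * κ * ((n : ℝ) * ((n : ℝ) - 1) * q ^ 4) := t3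
end
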